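/- Let V* be the unique fixed point of the projected operator Π_f T, where T is a γ'-contraction in the f-weighted norm with γ' = sqrt(γ²(1-κ)/β) < 1 and Π_f is the orthogonal projection (in f-norm) onto a linear subspace. Let V^π be the fixed point of T. Then ‖V* - V^π‖_f ≤ (1/sqrt(1 - γ'²)) · ‖Π_f V^π - V^π‖_f. -/

import Mathlib

theorem stmt_7 {X : Type*} [NormedAddCommGroup X] [InnerProductSpace ℝ X]
    [CompleteSpace X]
    (W : Submodule ℝ X) [W.HasOrthogonalProjection]
    (T : X → X) (γ' γ κ β : ℝ) (hβ : 0 < β)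
    (hγ' : γ' = Real.sqrt (γ ^ 2 * (1 - κ) / β)) (hγ'lt : γ' < 1)
    (hT : ∀ x y, ‖T x - T y‖ ≤ γ' * ‖x - y‖)
    (Vπ : X) (hVπ : T Vπ = Vπ)
    (Vstar : X) (hVstarW : Vstar ∈ W)
    (hVstar : ((W.orthogonalProjectionOnto (T Vstar) : W) : X) = Vstar) :
    ‖Vstar - Vπ‖ ≤
      (1 / Real.sqrt (1 - γ' ^ 2)) * ‖((W.orthogonalProjectionOnto Vπ : W) : X) - Vπ‖ := by
  set P := fun x => ((W.orthogonalProjectionOnto x : W) : X) with hP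
  have hγ'0 : 0 ≤ γ' := hγ' ▸ Real.sqrt_nonneg _
  have h1 : 0 < 1 - γ' ^ 2 := by nlinarith
  -- projection bound: ‖P x - P y‖ ≤ ‖x - y‖
  have hPnorm : ∀ x y : X, ‖P x - P y‖ ≤ ‖x - y‖ := by
    intro x y
    have : P x - P y = ((W.orthogonalProjectionOnto (x - y) : W) : X) := by
      simp [hP, map_sub]
    rw [this]
    have h1 := (W.orthogonalProjectionOnto).le_opNorm (x - y)
    have h2 : ‖W.orthogonalProjectionOnto‖ ≤ 1 := W.orthogonalProjectionOnto_norm_le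
    have h3 : ‖((W.orthogonalProjectionOnto (x - y) : W) : X)‖
        = ‖W.orthogonalProjectionOnto (x - y)‖ := rfl
    nlinarith [norm_nonneg (x - y)]
  -- contraction step
  have hstep : ‖Vstar - P Vπ‖ ≤ γ' * ‖Vstar - Vπ‖ := by
    have hPVπ : P Vπ = P (T Vπ) := by rw [hVπ]
    calc ‖Vstar - P Vπ‖ = ‖P (T Vstar) - P (T Vπ)‖ := by
          simp only [hP]; rw [hVstar, hVπ]
      _ ≤ ‖T Vstar - T Vπ‖ := hPnorm _ _
      _ ≤ γ' * ‖Vstar - Vπ‖ := hT _ _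
  -- Pythagoras
  have hmemW : Vstar - P Vπ ∈ W := Submodule.sub_mem W hVstarW (W.orthogonalProjectionOnto Vπ).2
  have hperp : P Vπ - Vπ ∈ Wᗮ := by
    have := Submodule.sub_starProjection_mem_orthogonal (K := W) Vπ
    have h' : -(Vπ - P Vπ) ∈ Wᗮ := Submodule.neg_mem _ this
    simpa [neg_sub, Submodule.starProjection_apply] using h'
  have hinner : (inner ℝ (Vstar - P Vπ) (P Vπ - Vπ) : ℝ) = 0 :=
    Submodule.inner_right_of_mem_orthogonal hmemW hperp
  have hpyth : ‖Vstar - Vπ‖ ^ 2 = ‖Vstar - P Vπ‖ ^ 2 + ‖P Vπ - Vπ‖ ^ 2 := by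
    have hsplit : Vstar - Vπ = (Vstar - P Vπ) + (P Vπ - Vπ) := by abel
    rw [hsplit]
    rw [← real_inner_self_eq_norm_sq, ← real_inner_self_eq_norm_sq,
      ← real_inner_self_eq_norm_sq]
    rw [real_inner_add_add_self, hinner]; ring
  -- combine
  have hkey : (1 - γ' ^ 2) * ‖Vstar - Vπ‖ ^ 2 ≤ ‖P Vπ - Vπ‖ ^ 2 := by
    nlinarith [norm_nonneg (Vstar - P Vπ), norm_nonneg (Vstar - Vπ), hstep, hpyth]
  have hs : Real.sqrt (1 - γ' ^ 2) > 0 := Real.sqrt_pos.mpr h1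
  rw [div_mul_eq_mul_div, one_mul, le_div_iff₀ hs]
  have hsq : (‖Vstar - Vπ‖ * Real.sqrt (1 - γ' ^ 2)) ^ 2 ≤ ‖P Vπ - Vπ‖ ^ 2 := by
    rw [mul_pow, Real.sq_sqrt h1.le]
    nlinarith [hkey]
  have h4 := Real.sqrt_le_sqrt hsq
  rw [Real.sqrt_sq (by positivity), Real.sqrt_sq (norm_nonneg _)] at h4
  simpa [hP] using h4
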